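/- arXiv:2107.04400 — 2 statements merged into one kernel-verified Lean document; each statement's English description precedes it below -/
import Mathlib

section
/- Let X be a bounded domain in ℝⁿ with Green function G_X, let η > 0, x ∈ X with dist(x, ∂X) ≥ η, let π(x) ∈ ∂X be a closest boundary point, and let y₀ = (x + π(x))/2. Then there exists ε₀ ∈ (0,1), depending only on η and n, such that Γ(x − π(x)) ≤ ε₀·Γ(x − y₀), where Γ is the fundamental solution of the Laplacian; and consequently, if a barrier ω at π(x) is bounded above by M on X̄, then G_X(x, y₀) ≥ ((1 − ε₀)/2)·Γ(x − y₀). -/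
open Metric

noncomputable section

/-- The Laplacian on `ℝⁿ` as the sum of second derivatives in coordinate directions. -/
def lapE {n : ℕ} (φ : EuclideanSpace ℝ (Fin n) → ℝ) (x : EuclideanSpace ℝ (Fin n)) : ℝ :=
  ∑ i : Fin n, fderiv ℝ (fun y => fderiv ℝ φ y (EuclideanSpace.single i 1)) x
    (EuclideanSpace.single i 1)

/-- The fundamental solution of the Laplacian in `ℝⁿ` (up to a positive dimensional
normalizing constant), `Γ(x) = |x|^{2−n}`. -/
def fs {n : ℕ} (x : EuclideanSpace ℝ (Fin n)) : ℝ := ‖x‖ ^ ((2 : ℝ) - n)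

open Filter Set
open scoped RealInnerProductSpace Topology

section Aux

/-- Second derivative test: local max implies second derivative nonpositive. -/
lemma sd_test (g : ℝ → ℝ) (hg : ContDiffAt ℝ 2 g 0) (hmax : IsLocalMax g 0) :
    deriv (deriv g) 0 ≤ 0 := by
  by_contra hpos
  push_neg at hpos
  have hev : ∀ᶠ t in 𝓝 (0:ℝ), ContDiffAt ℝ 2 g t := hg.eventually (by norm_num)
  have hdiff : ∀ᶠ t in 𝓝 (0:ℝ), DifferentiableAt ℝ g t :=
    hev.mono fun t ht => ht.differentiableAt (by norm_num)
  have hd1 : DifferentiableAt ℝ (deriv g) 0 := by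
    have h := hg.fderiv_right (m := 1) (by norm_num)
    have h2 : DifferentiableAt ℝ (fun y => fderiv ℝ g y 1) 0 := by
      have := ((ContinuousLinearMap.apply ℝ ℝ (1:ℝ)).differentiableAt).comp 0
        (h.differentiableAt (by norm_num))
      exact this
    have : (fun y => fderiv ℝ g y 1) = deriv g := by
      funext y; rw [fderiv_apply_one_eq_deriv]
    rwa [this] at h2
  have h0 : deriv g 0 = 0 := hmax.deriv_eq_zero
  have hslope : Tendsto (slope (deriv g) 0) (𝓝[≠] (0:ℝ)) (𝓝 (deriv (deriv g) 0)) := by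
    have := hd1.hasDerivAt
    rw [hasDerivAt_iff_tendsto_slope] at this
    exact this
  have hsl : ∀ᶠ t in 𝓝[≠] (0:ℝ), 0 < slope (deriv g) 0 t :=
    hslope.eventually (eventually_gt_nhds hpos)
  rw [eventually_nhdsWithin_iff] at hsl
  have hall : ∀ᶠ t in 𝓝 (0:ℝ),
      (DifferentiableAt ℝ g t ∧ g t ≤ g 0) ∧ (t ∈ ({0}ᶜ : Set ℝ) → 0 < slope (deriv g) 0 t) :=
    (hdiff.and hmax).and hsl
  rcases Metric.eventually_nhds_iff.mp hall with ⟨δ, hδ, hP⟩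
  set b := δ/2 with hb
  have hbpos : 0 < b := by positivity
  have hmem : ∀ t : ℝ, t ∈ Icc (0:ℝ) b → dist t 0 < δ := by
    intro t ht
    rw [Real.dist_eq, sub_zero, abs_of_nonneg ht.1]
    have := ht.2; simp only [hb] at this ⊢; linarith
  have hmono : StrictMonoOn g (Icc (0:ℝ) b) := by
    apply strictMonoOn_of_deriv_pos (convex_Icc 0 b)
    · intro t ht
      exact ((hP (hmem t ht)).1.1).continuousAt.continuousWithinAt
    · intro t ht
      rw [interior_Icc] at ht
      have htne : t ∈ ({0}ᶜ : Set ℝ) := by simp; linarith [ht.1]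
      have hsl' := (hP (hmem t ⟨le_of_lt ht.1, le_of_lt ht.2⟩)).2 htne
      rw [slope_def_field, h0, sub_zero, sub_zero] at hsl'
      have := mul_pos hsl' ht.1
      rwa [div_mul_cancel₀ _ (ne_of_gt ht.1)] at this
  have hlt : g 0 < g b := hmono (left_mem_Icc.mpr hbpos.le) (right_mem_Icc.mpr hbpos.le) hbpos
  have hle : g b ≤ g 0 := (hP (by rw [Real.dist_eq, sub_zero, abs_of_nonneg hbpos.le]; simp [hb]; linarith)).1.2
  linarith

variable {E : Type*} [NormedAddCommGroup E] [InnerProductSpace ℝ E]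

lemma diff_fderiv_apply {u : E → ℝ} {z e : E} (hz : ContDiffAt ℝ 2 u z) :
    DifferentiableAt ℝ (fun y => fderiv ℝ u y e) z := by
  have h := hz.fderiv_right (m := 1) (by norm_num)
  have := ((ContinuousLinearMap.apply ℝ ℝ e).differentiableAt).comp z
    (h.differentiableAt (by norm_num))
  exact this

/-- At an interior local maximum, every second directional derivative is nonpositive. -/
lemma dir2_nonpos (v : E → ℝ) (z e : E) (hv : ContDiffAt ℝ 2 v z)
    (hmax : IsLocalMax v z) :
    fderiv ℝ (fun y => fderiv ℝ v y e) z e ≤ 0 := by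
  set φ : ℝ → E := fun t => z + t • e with hφ
  have hφc : Continuous φ := by continuity
  have hφ0 : φ 0 = z := by simp [hφ]
  have hφcd : ContDiff ℝ 2 φ := by
    exact contDiff_const.add (contDiff_id.smul contDiff_const)
  have hφt : ∀ t : ℝ, HasDerivAt φ e t := by
    intro t
    have h := ((hasDerivAt_id' t).smul_const e).const_add z; rw [one_smul] at h; exact h
  set g : ℝ → ℝ := fun t => v (φ t) with hg
  have hgc : ContDiffAt ℝ 2 g 0 := by
    have hv' : ContDiffAt ℝ 2 v (φ 0) := by rwa [hφ0]
    have := hv'.comp (0:ℝ) hφcd.contDiffAt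
    exact this
  have hgmax : IsLocalMax g 0 := by
    have : Tendsto φ (𝓝 0) (𝓝 z) := by rw [← hφ0]; exact hφc.continuousAt
    have h2 := this.eventually hmax
    simpa [hg, IsLocalMax, IsMaxFilter, hφ0] using h2
  have hd2 := sd_test g hgc hgmax
  -- compute deriv (deriv g) 0
  have hev : ∀ᶠ y in 𝓝 z, ContDiffAt ℝ 2 v y := hv.eventually (by norm_num)
  have hevt : ∀ᶠ t in 𝓝 (0:ℝ), ContDiffAt ℝ 2 v (φ t) := by
    have : Tendsto φ (𝓝 0) (𝓝 z) := by rw [← hφ0]; exact hφc.continuousAt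
    exact this.eventually hev
  have hderiv : ∀ᶠ t in 𝓝 (0:ℝ), deriv g t = fderiv ℝ v (φ t) e := by
    refine hevt.mono fun t ht => ?_
    have hda : HasDerivAt g (fderiv ℝ v (φ t) e) t :=
      ((ht.differentiableAt (by norm_num)).hasFDerivAt).comp_hasDerivAt t (hφt t)
    exact hda.deriv
  have hder2 : deriv (deriv g) 0 = fderiv ℝ (fun y => fderiv ℝ v y e) z e := by
    have h1 : deriv (deriv g) 0 = deriv (fun t => fderiv ℝ v (φ t) e) 0 :=
      Filter.EventuallyEq.deriv_eq hderiv
    rw [h1]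
    have hG : DifferentiableAt ℝ (fun y => fderiv ℝ v y e) z := diff_fderiv_apply hv
    have : HasDerivAt (fun t => fderiv ℝ v (φ t) e)
        (fderiv ℝ (fun y => fderiv ℝ v y e) z e) 0 := by
      have hG' : HasFDerivAt (fun y => fderiv ℝ v y e)
          (fderiv ℝ (fun y => fderiv ℝ v y e) z) (φ 0) := by
        rw [hφ0]; exact hG.hasFDerivAt
      exact hG'.comp_hasDerivAt 0 (hφt 0)
    exact this.deriv
  rwa [hder2] at hd2

lemma pert_fderiv (u : E → ℝ) (z : E) (hz : ContDiffAt ℝ 2 u z) (ε : ℝ) (e : E) :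
    fderiv ℝ (fun y => fderiv ℝ (fun w => u w + ε * ‖w‖ ^ 2) y e) z e
      = fderiv ℝ (fun y => fderiv ℝ u y e) z e + 2 * ε * ⟪e, e⟫ := by
  have hev : ∀ᶠ y in 𝓝 z, DifferentiableAt ℝ u y :=
    (hz.eventually (by norm_num)).mono fun y hy => hy.differentiableAt (by norm_num)
  have h1 : (fun y => fderiv ℝ (fun w => u w + ε * ‖w‖ ^ 2) y e)
      =ᶠ[𝓝 z] (fun y => fderiv ℝ u y e + ((2 * ε) • innerSL ℝ e) y) := by
    refine hev.mono fun y hy => ?_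
    have hq : HasFDerivAt (fun w : E => ε * ‖w‖ ^ 2) (ε • (2 • innerSL ℝ y)) y := by
      have h := ((hasStrictFDerivAt_norm_sq y).hasFDerivAt).const_smul ε
      exact h
    have hsum := (hy.hasFDerivAt).fun_add hq
    show (fderiv ℝ (fun w => u w + ε * ‖w‖ ^ 2) y) e
      = (fderiv ℝ u y) e + ((2 * ε) • innerSL ℝ e) y
    rw [hsum.fderiv]
    simp only [ContinuousLinearMap.add_apply, ContinuousLinearMap.smul_apply,
      ContinuousLinearMap.coe_smul', Pi.smul_apply, innerSL_apply_apply, smul_eq_mul]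
    rw [real_inner_comm y e]
    ring
  rw [h1.fderiv_eq, fderiv_fun_add (diff_fderiv_apply hz)
    (((2 * ε) • innerSL ℝ e).differentiableAt)]
  have hL : fderiv ℝ (fun y => ((2 * ε) • innerSL ℝ e) y) z = (2 * ε) • innerSL ℝ e :=
    ((2 * ε) • innerSL ℝ e).fderiv
  simp only [ContinuousLinearMap.add_apply, hL, ContinuousLinearMap.smul_apply,
    innerSL_apply_apply, smul_eq_mul]
  try ring


end Aux

lemma maxp {n : ℕ} (hn : 0 < n) (X : Set (EuclideanSpace ℝ (Fin n))) (hXo : IsOpen X)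
    (hXb : Bornology.IsBounded X) (u : EuclideanSpace ℝ (Fin n) → ℝ)
    (hc : ContinuousOn u (closure X)) (hd : ContDiffOn ℝ 2 u X)
    (hl : ∀ y ∈ X, 0 ≤ lapE u y) (hfr : ∀ y ∈ frontier X, u y ≤ 0) :
    ∀ w ∈ closure X, u w ≤ 0 := by
  obtain ⟨r, hr, hsub⟩ : ∃ r, 0 < r ∧ closure X ⊆ closedBall 0 r := by
    obtain ⟨r, hr, hsub⟩ := hXb.closure.subset_closedBall_lt 0 0
    exact ⟨r, hr, hsub⟩
  set R := r ^ 2 with hR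
  have hRpos : 0 < R := by positivity
  have key : ∀ ε : ℝ, 0 < ε → ∀ w ∈ closure X, u w ≤ ε * R := by
    intro ε hε w hw
    set v : EuclideanSpace ℝ (Fin n) → ℝ := fun y => u y + ε * ‖y‖ ^ 2 with hv
    have hvc : ContinuousOn v (closure X) := by
      apply hc.add
      exact (continuous_const.mul ((contDiff_norm_sq (𝕜 := ℝ) (n := 2)).continuous)).continuousOn
    have hcomp : IsCompact (closure X) := hXb.isCompact_closure
    obtain ⟨z, hzcl, hzmax⟩ := hcomp.exists_isMaxOn ⟨w, hw⟩ hvc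
    by_cases hzX : z ∈ X
    · exfalso
      have hcda : ∀ y ∈ X, ContDiffAt ℝ 2 u y := fun y hy => hd.contDiffAt (hXo.mem_nhds hy)
      have hvcda : ContDiffAt ℝ 2 v z :=
        (hcda z hzX).add (contDiffAt_const.mul ((contDiff_norm_sq (𝕜 := ℝ) (n := 2)).contDiffAt))
      have hlocmax : IsLocalMax v z := by
        filter_upwards [hXo.mem_nhds hzX] with y hy
        exact (isMaxOn_iff.mp hzmax) y (subset_closure hy)
      have hterm : ∀ i : Fin n,
          fderiv ℝ (fun y => fderiv ℝ u y (EuclideanSpace.single i 1)) z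
            (EuclideanSpace.single i 1) ≤ -(2 * ε) := by
        intro i
        have h1 := dir2_nonpos v z (EuclideanSpace.single i 1) hvcda hlocmax
        have h2 := pert_fderiv u z (hcda z hzX) ε (EuclideanSpace.single i 1)
        have h3 : ⟪(EuclideanSpace.single i (1:ℝ)), EuclideanSpace.single i (1:ℝ)⟫ = 1 := by
          simp [EuclideanSpace.inner_single_left, EuclideanSpace.single_apply]
        rw [hv] at h1
        rw [h2, h3] at h1
        linarith
      have hsum : lapE u z ≤ (n : ℝ) * (-(2 * ε)) := by
        rw [lapE]
        calc ∑ i : Fin n, fderiv ℝ (fun y => fderiv ℝ u y (EuclideanSpace.single i 1)) z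
              (EuclideanSpace.single i 1)
            ≤ ∑ _i : Fin n, -(2 * ε) := Finset.sum_le_sum fun i _ => hterm i
          _ = (n : ℝ) * (-(2 * ε)) := by simp [mul_comm]
      have hl' := hl z hzX
      have hnpos : (0:ℝ) < n := by exact_mod_cast hn
      nlinarith
    · have hzfr : z ∈ frontier X := by
        rw [frontier, hXo.interior_eq]; exact ⟨hzcl, hzX⟩
      have h1 : v w ≤ v z := isMaxOn_iff.mp hzmax w hw
      have h2 : u z ≤ 0 := hfr z hzfr
      have h3 : ‖z‖ ≤ r := by simpa using hsub hzcl
      have h4 : ε * ‖z‖ ^ 2 ≤ ε * R := by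
        apply mul_le_mul_of_nonneg_left _ hε.le
        rw [hR]; nlinarith [norm_nonneg z]
      have h5 : 0 ≤ ε * ‖w‖ ^ 2 := by positivity
      simp only [hv] at h1
      nlinarith
  intro w hw
  by_contra hcon
  push_neg at hcon
  have hk := key (u w / (2 * R)) (by positivity) w hw
  rw [div_mul_eq_mul_div] at hk
  have heq : u w * R / (2 * R) = u w / 2 := by
    field_simp
  rw [heq] at hk
  linarith


/-- interior positivity of the Green function: if `x ∈ X` has
`dist(x,∂X) ≥ η`, `π(x)` is a closest boundary point and `y₀` the midpoint of `x` and `π(x)`,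
then there is `ε₀ ∈ (0,1)`, depending only on `η` and `n`, with
`Γ(x−π(x)) ≤ ε₀ Γ(x−y₀)`; and if a barrier `ω` at `π(x)` is bounded by `M`, then
`G_X(x,y₀) = Γ(x−y₀) − H_X(x,y₀) ≥ ((1−ε₀)/2) Γ(x−y₀)`. -/
theorem green_function_interior_lower_bound (n : ℕ) (hn : 3 ≤ n) (η : ℝ) (hη : 0 < η) :
    ∃ ε₀ : ℝ, 0 < ε₀ ∧ ε₀ < 1 ∧
      ∀ (X : Set (EuclideanSpace ℝ (Fin n))) (x πx : EuclideanSpace ℝ (Fin n)),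
        IsOpen X → Bornology.IsBounded X → X.Nonempty → x ∈ X →
        η ≤ Metric.infDist x (frontier X) →
        πx ∈ frontier X → dist x πx = Metric.infDist x (frontier X) →
        fs (x - πx) ≤ ε₀ * fs (x - midpoint ℝ x πx) ∧
        ∀ (H ω : EuclideanSpace ℝ (Fin n) → ℝ) (M : ℝ), 0 < M →
          ContinuousOn H (closure X) → ContDiffOn ℝ 2 H X →
          (∀ y ∈ X, lapE H y = 0) → (∀ y ∈ frontier X, H y = fs (x - y)) →
          ContinuousOn ω (closure X) → ContDiffOn ℝ 2 ω X →
          (∀ y ∈ X, lapE ω y ≤ 0) → (∀ y ∈ closure X, 0 ≤ ω y) → ω πx = 0 →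
          (∀ y ∈ closure X, ω y ≤ M) →
          (1 - ε₀) / 2 * fs (x - midpoint ℝ x πx) ≤
            fs (x - midpoint ℝ x πx) - H (midpoint ℝ x πx) := by
  have hc_neg : ((2:ℝ) - n) < 0 := by
    have h3 : (3:ℝ) ≤ (n:ℝ) := by exact_mod_cast hn
    linarith
  refine ⟨(2:ℝ) ^ ((2:ℝ) - (n:ℝ)), Real.rpow_pos_of_pos two_pos _,
    Real.rpow_lt_one_of_one_lt_of_neg one_lt_two hc_neg, ?_⟩
  set ε₀ := (2:ℝ) ^ ((2:ℝ) - (n:ℝ)) with hε₀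
  have hε₀pos : 0 < ε₀ := Real.rpow_pos_of_pos two_pos _
  have hε₀lt : ε₀ < 1 := Real.rpow_lt_one_of_one_lt_of_neg one_lt_two hc_neg
  intro X x πx hXo hXb hXne hxX hηd hπfr hdist
  set y₀ := midpoint ℝ x πx with hy₀
  have hdpos : 0 < Metric.infDist x (frontier X) := lt_of_lt_of_le hη hηd
  have hxπ : x - y₀ = (2⁻¹ : ℝ) • (x - πx) := by
    rw [hy₀, midpoint_eq_smul_add, invOf_eq_inv]
    module
  have hnorm : ‖x - y₀‖ = 2⁻¹ * ‖x - πx‖ := by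
    rw [hxπ, norm_smul]; norm_num
  have hD : ‖x - πx‖ = dist x πx := (dist_eq_norm x πx).symm
  have hDpos : 0 < ‖x - πx‖ := by rw [hD, hdist]; exact hdpos
  have hfs_eq : fs (x - πx) = ε₀ * fs (x - y₀) := by
    rw [fs, fs, hnorm, Real.mul_rpow (by norm_num) hDpos.le, hε₀,
      ← mul_assoc, ← Real.mul_rpow two_pos.le (by norm_num)]
    norm_num
  refine ⟨le_of_eq hfs_eq, ?_⟩
  intro H ω M hM hHc hHd hHlap hHbd hωc hωd hωlap hωnn hωπ hωM
  have hXne_univ : X ≠ univ := by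
    intro h
    rw [h, frontier_univ] at hπfr
    exact hπfr
  obtain ⟨yb, hyb, hybd⟩ := exists_mem_frontier_infDist_compl_eq_dist hxX hXne_univ
  have hcle : Metric.infDist x (frontier X) ≤ Metric.infDist x Xᶜ := by
    rw [hybd]
    exact Metric.infDist_le_dist_of_mem hyb
  have hy₀X : y₀ ∈ X := by
    apply Metric.ball_infDist_compl_subset
    rw [mem_ball]
    have hdm : dist y₀ x = 2⁻¹ * dist x πx := by
      rw [hy₀, dist_midpoint_left]
      norm_num
    rw [hdm, hdist]
    linarith
  have hmaxp := maxp (by omega) X hXo hXb (fun y => H y - fs (x - πx))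
    (hHc.sub continuousOn_const) (hHd.sub contDiffOn_const)
    (fun y hy => by
      have heq : lapE (fun w => H w - fs (x - πx)) y = lapE H y := by
        unfold lapE
        refine Finset.sum_congr rfl fun i _ => ?_
        have : (fun z => fderiv ℝ (fun w => H w - fs (x - πx)) z (EuclideanSpace.single i 1))
            = fun z => fderiv ℝ H z (EuclideanSpace.single i 1) := by
          funext z; rw [fderiv_sub_const]
        rw [this]
      rw [heq, hHlap y hy])
    (fun y hy => by
      have h1 := hHbd y hy
      have h2 : fs (x - y) ≤ fs (x - πx) := by
        rw [fs, fs]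
        apply Real.rpow_le_rpow_of_nonpos hDpos _ hc_neg.le
        rw [hD, hdist, ← dist_eq_norm]
        exact Metric.infDist_le_dist_of_mem hy
      show H y - fs (x - πx) ≤ 0
      rw [h1]
      linarith)
    y₀ (subset_closure hy₀X)
  have hΓnn : 0 ≤ fs (x - y₀) := Real.rpow_nonneg (norm_nonneg _) _
  have hmaxp' : H y₀ - fs (x - πx) ≤ 0 := hmaxp
  have hHle : H y₀ ≤ ε₀ * fs (x - y₀) := by
    rw [← hfs_eq]
    linarith
  nlinarith
end
end

section
/- Let Y ⊂ ℂⁿ be a measurable set contained in a ball B_r centered at the origin and containing a Euclidean ball of fixed radius around the origin, and let F ⊂ Y be measurable with |F| ≥ γ|Y|, γ > 0. Then there exists a constant a > 0, depending only on n and r, and a unit vector Θ ∈ ℂⁿ such that the planar sections satisfy |F_Θ| ≥ a·γ·|Y_Θ|, where F_Θ = { w ∈ ℂ : wΘ ∈ F } and |·| is 2-dimensional Lebesgue measure. -/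
open MeasureTheory Metric Set
open scoped ENNReal

noncomputable section

instance {n : ℕ} : MeasurableSpace (EuclideanSpace ℂ (Fin n)) := borel _
instance {n : ℕ} : BorelSpace (EuclideanSpace ℂ (Fin n)) := ⟨rfl⟩
instance {n : ℕ} : InnerProductSpace ℝ (EuclideanSpace ℂ (Fin n)) :=
  InnerProductSpace.rclikeToReal ℂ _

section Helpers

variable {V : Type*} [NormedAddCommGroup V] [InnerProductSpace ℝ V]
  [FiniteDimensional ℝ V] [MeasurableSpace V] [BorelSpace V]

lemma CLS.vol_smul_unit_preimage [NormedSpace ℂ V] [IsScalarTower ℝ ℂ V]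
    {u : ℂ} (hu : ‖u‖ = 1) (s : Set V) :
    volume ((fun x : V => u • x) ⁻¹' s) = volume s := by
  have hu0 : u ≠ 0 := by intro h; simp [h] at hu
  let e : V ≃ₗᵢ[ℝ] V :=
    { toLinearEquiv := (LinearEquiv.smulOfNeZero ℂ V u hu0).restrictScalars ℝ
      norm_map' := fun x => by
        show ‖u • x‖ = ‖x‖
        rw [norm_smul, hu, one_mul] }
  have h1 : (fun x : V => u • x) = e.toHomeomorph.toMeasurableEquiv := rfl
  rw [h1, ← MeasurableEquiv.map_apply]
  have h2 : Measure.map (⇑e.toHomeomorph.toMeasurableEquiv) volume = volume := e.measurePreserving.map_eq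
  rw [h2]

lemma CLS.vol_smul_preimage [NormedSpace ℂ V] [IsScalarTower ℝ ℂ V]
    {w : ℂ} (hw : w ≠ 0) (s : Set V) :
    volume ((fun x : V => w • x) ⁻¹' s)
      = ENNReal.ofReal ((‖w‖ ^ Module.finrank ℝ V)⁻¹) * volume s := by
  set u : ℂ := (‖w‖ : ℂ)⁻¹ * w with hu_def
  have hw' : ‖w‖ ≠ 0 := norm_ne_zero_iff.2 hw
  have hwc : (‖w‖ : ℂ) ≠ 0 := by exact_mod_cast hw'
  have hu : ‖u‖ = 1 := by
    rw [hu_def, norm_mul, norm_inv, Complex.norm_real, norm_norm, inv_mul_cancel₀ hw']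
  have hdecomp : (fun x : V => w • x) = (fun y : V => (‖w‖ : ℝ) • y) ∘ (fun x : V => u • x) := by
    funext x
    show w • x = (‖w‖ : ℝ) • u • x
    rw [← smul_assoc]
    have : (‖w‖ : ℝ) • u = w := by
      rw [Complex.real_smul, hu_def, mul_inv_cancel_left₀ hwc]
    rw [this]
  rw [hdecomp, Set.preimage_comp, CLS.vol_smul_unit_preimage hu,
    Measure.addHaar_preimage_smul volume hw']
  congr 2
  rw [abs_of_nonneg (by positivity)]

lemma CLS.lintegral_inv_norm_sq_ball_lt_top (μ : Measure V) [μ.IsAddHaarMeasure]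
    (h2 : 2 < Module.finrank ℝ V) :
    ∫⁻ x in ball (0:V) 1, ENNReal.ofReal ((‖x‖ ^ 2)⁻¹) ∂μ < ⊤ := by
  have hnt : Nontrivial V := by
    rcases subsingleton_or_nontrivial V with h | h
    · exfalso; rw [Module.finrank_zero_of_subsingleton] at h2; omega
    · exact h
  set m := Module.finrank ℝ V - 1 with hm
  have hm2 : 2 ≤ m := by omega
  set g : ℝ → ℝ≥0∞ := fun t => if t < 1 then ENNReal.ofReal ((t ^ 2)⁻¹) else 0 with hg_def
  have hg : Measurable g := by
    apply Measurable.ite measurableSet_Iio <;> fun_prop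
  have step1 : ∫⁻ x in ball (0:V) 1, ENNReal.ofReal ((‖x‖ ^ 2)⁻¹) ∂μ ≤ ∫⁻ x, g ‖x‖ ∂μ := by
    rw [← lintegral_indicator measurableSet_ball]
    apply lintegral_mono
    intro x
    by_cases hx : x ∈ ball (0:V) 1
    · rw [indicator_of_mem hx]
      simp only [mem_ball_zero_iff] at hx
      simp [hg_def, hx]
    · simp [indicator_of_notMem hx]
  have step2 : ∫⁻ x, g ‖x‖ ∂μ = ∫⁻ x in ({(0:V)}ᶜ), g ‖x‖ ∂μ := by
    rw [MeasureTheory.restrict_compl_singleton]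
  have step3 : ∫⁻ x in ({(0:V)}ᶜ), g ‖x‖ ∂μ
      = ∫⁻ x : (({(0:V)}ᶜ : Set V)), g ‖x.1‖ ∂(μ.comap Subtype.val) :=
    (lintegral_subtype_comap (measurableSet_singleton (0:V)).compl (fun x => g ‖x‖)).symm
  have step4 : ∫⁻ x : (({(0:V)}ᶜ : Set V)), g ‖x.1‖ ∂(μ.comap Subtype.val)
      = ∫⁻ p : sphere (0:V) 1 × Ioi (0:ℝ), g p.2.1
          ∂(μ.toSphere.prod (Measure.volumeIoiPow m)) := by
    rw [← μ.measurePreserving_homeomorphUnitSphereProd.lintegral_comp_emb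
      (Homeomorph.measurableEmbedding _) (fun p => g p.2.1)]
    simp [homeomorphUnitSphereProd]
  have step5 : ∫⁻ p : sphere (0:V) 1 × Ioi (0:ℝ), g p.2.1
          ∂(μ.toSphere.prod (Measure.volumeIoiPow m))
      = μ.toSphere univ * ∫⁻ t : Ioi (0:ℝ), g t.1 ∂(Measure.volumeIoiPow m) := by
    rw [lintegral_prod _ (by fun_prop :
      Measurable fun p : sphere (0:V) 1 × Ioi (0:ℝ) => g p.2.1).aemeasurable]
    simp [lintegral_const, mul_comm]
  have step6 : ∫⁻ t : Ioi (0:ℝ), g t.1 ∂(Measure.volumeIoiPow m) ≤ 1 := by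
    rw [Measure.volumeIoiPow, lintegral_withDensity_eq_lintegral_mul _ (by fun_prop) (by fun_prop)]
    have : ∫⁻ t : Ioi (0:ℝ), ENNReal.ofReal (t.1 ^ m) * g t.1 ∂(Measure.comap Subtype.val volume)
        = ∫⁻ t in Ioi (0:ℝ), ENNReal.ofReal (t ^ m) * g t ∂volume :=
      lintegral_subtype_comap measurableSet_Ioi (fun t => ENNReal.ofReal (t ^ m) * g t)
    simp only [Pi.mul_apply]
    rw [this]
    have hb : ∀ t ∈ Ioi (0:ℝ), ENNReal.ofReal (t ^ m) * g t
        ≤ indicator (Ioo (0:ℝ) 1) (fun _ => 1) t := by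
      intro t ht
      simp only [mem_Ioi] at ht
      simp only [hg_def]
      by_cases h1 : t < 1
      · rw [if_pos h1, indicator_of_mem (by exact ⟨ht, h1⟩), ← ENNReal.ofReal_mul (by positivity)]
        apply ENNReal.ofReal_le_one.2
        rw [mul_inv_le_iff₀ (by positivity), one_mul]
        exact pow_le_pow_of_le_one ht.le h1.le ((by norm_num : (2:ℕ) ≤ 2).trans hm2)
      · simp [if_neg h1]
    calc ∫⁻ t in Ioi (0:ℝ), ENNReal.ofReal (t ^ m) * g t ∂volume
        ≤ ∫⁻ t in Ioi (0:ℝ), indicator (Ioo (0:ℝ) 1) (fun _ => 1) t ∂volume :=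
          setLIntegral_mono (by fun_prop (disch := exact measurableSet_Ioo)) hb
      _ ≤ ∫⁻ t, indicator (Ioo (0:ℝ) 1) (fun _ => 1) t ∂volume := setLIntegral_le_lintegral _ _
      _ = volume (Ioo (0:ℝ) 1) := by rw [lintegral_indicator measurableSet_Ioo]; simp
      _ ≤ 1 := by simp [Real.volume_Ioo]
  calc ∫⁻ x in ball (0:V) 1, ENNReal.ofReal ((‖x‖ ^ 2)⁻¹) ∂μ
      ≤ μ.toSphere univ * ∫⁻ t : Ioi (0:ℝ), g t.1 ∂(Measure.volumeIoiPow m) := by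
        rw [← step5, ← step4, ← step3, ← step2]; exact step1
    _ ≤ μ.toSphere univ * 1 := by gcongr
    _ < ⊤ := by rw [mul_one]; exact measure_lt_top _ _

lemma CLS.finrank_E (n : ℕ) : Module.finrank ℝ (EuclideanSpace ℂ (Fin n)) = 2 * n := by
  rw [← Module.finrank_mul_finrank ℝ ℂ (EuclideanSpace ℂ (Fin n)), Complex.finrank_real_complex,
    finrank_euclideanSpace, Fintype.card_fin]

lemma CLS.volume_slice_one (S : Set (EuclideanSpace ℂ (Fin 1))) :
    volume {w : ℂ | w • (EuclideanSpace.single (0 : Fin 1) (1:ℂ)) ∈ S} = volume S := by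
  let e : ℂ ≃ₗᵢ[ℝ] EuclideanSpace ℂ (Fin 1) :=
    { toLinearEquiv := (((WithLp.linearEquiv 2 ℂ (Fin 1 → ℂ)).trans
        (LinearEquiv.funUnique (Fin 1) ℂ ℂ)).symm : ℂ ≃ₗ[ℂ] _).restrictScalars ℝ
      norm_map' := fun w => by
        rw [EuclideanSpace.norm_eq]
        simp [Fin.sum_univ_one] }
  have h1 : {w : ℂ | w • (EuclideanSpace.single (0 : Fin 1) (1:ℂ)) ∈ S} = e ⁻¹' S := by
    ext w
    simp only [Set.mem_setOf_eq, Set.mem_preimage]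
    have : w • (EuclideanSpace.single (0 : Fin 1) (1:ℂ)) = e w := by
      ext i
      have hi : i = 0 := Subsingleton.elim i 0
      subst hi
      simp [e, EuclideanSpace.single_apply, WithLp.linearEquiv, LinearEquiv.funUnique]
    rw [this]
  rw [h1]
  have h2 : e ⁻¹' S = e.toHomeomorph.toMeasurableEquiv ⁻¹' S := rfl
  rw [h2, ← MeasurableEquiv.map_apply]
  have h3 : Measure.map (⇑e.toHomeomorph.toMeasurableEquiv) volume = volume := e.measurePreserving.map_eq
  rw [h3]

end Helpers

/-- complex-line slicing: if `Y ⊆ B(0,r)` contains `B(0,c)` and `F ⊆ Y` has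
`|F| ≥ γ|Y|`, then there is a direction `Θ`, `|Θ| = 1`, whose planar section satisfies
`|F_Θ| ≥ a γ |Y_Θ|` with `a > 0` depending only on `n`, `r` and `c`. -/
theorem complex_line_slicing (n : ℕ) (hn : 1 ≤ n) (r c : ℝ) (hr : 0 < r) (hc : 0 < c) :
    ∃ a : ℝ, 0 < a ∧
      ∀ (Y F : Set (EuclideanSpace ℂ (Fin n))) (γ : ℝ),
        MeasurableSet Y → MeasurableSet F → F ⊆ Y →
        Y ⊆ ball 0 r → ball 0 c ⊆ Y → 0 < γ →
        ENNReal.ofReal γ * volume Y ≤ volume F →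
        ∃ Θ : EuclideanSpace ℂ (Fin n), ‖Θ‖ = 1 ∧
          ENNReal.ofReal (a * γ) * volume { w : ℂ | w • Θ ∈ Y } ≤
            volume { w : ℂ | w • Θ ∈ F } := by
  rcases Nat.lt_or_ge n 2 with hn1 | hn2
  · -- case n = 1
    have hn1' : n = 1 := by omega
    subst hn1'
    refine ⟨1, one_pos, fun Y F γ hY hF hFY hYr hcY hγ hγF => ?_⟩
    refine ⟨EuclideanSpace.single (0 : Fin 1) (1:ℂ), by simp [EuclideanSpace.norm_single], ?_⟩
    rw [CLS.volume_slice_one Y, CLS.volume_slice_one F, one_mul]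
    exact hγF
  -- case 2 ≤ n
  haveI hnt : Nontrivial (EuclideanSpace ℂ (Fin n)) := by
    have h0 : EuclideanSpace.single (⟨0, by omega⟩ : Fin n) (1:ℂ) ≠ 0 := by
      intro h
      have h2 := congrArg (fun v => ‖v‖) h
      simp [EuclideanSpace.norm_single] at h2
    exact ⟨⟨_, 0, h0⟩⟩
  have hd : Module.finrank ℝ (EuclideanSpace ℂ (Fin n)) = 2 * n := CLS.finrank_E n
  set Vc := volume (ball (0 : EuclideanSpace ℂ (Fin n)) c) with hVc_def
  set Vr := volume (ball (0:ℂ) r) with hVr_def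
  set I2 := ∫⁻ x in ball (0 : EuclideanSpace ℂ (Fin n)) 1,
    ENNReal.ofReal ((‖x‖ ^ 2)⁻¹) ∂volume with hI2_def
  set A : Set ℂ := closedBall 0 (2*r) \ ball 0 r with hA_def
  have hVc0 : 0 < Vc := measure_ball_pos _ _ hc
  have hVcT : Vc < ⊤ := measure_ball_lt_top
  have hVr0 : 0 < Vr := measure_ball_pos _ _ hr
  have hVrT : Vr < ⊤ := measure_ball_lt_top
  have hI2T : I2 < ⊤ := CLS.lintegral_inv_norm_sq_ball_lt_top volume (by rw [hd]; omega)
  have hI20 : 0 < I2 := by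
    have h1 : volume (ball (0 : EuclideanSpace ℂ (Fin n)) 1) ≤ I2 := by
      rw [← setLIntegral_one]
      refine setLIntegral_mono_ae (by fun_prop) ?_
      filter_upwards [compl_mem_ae_iff.2 (measure_singleton (0 : EuclideanSpace ℂ (Fin n)))]
        with x hx0 hxball
      have hx0' : x ≠ 0 := hx0
      have hxn : 0 < ‖x‖ := norm_pos_iff.2 hx0'
      rw [mem_ball_zero_iff] at hxball
      rw [show (1:ℝ≥0∞) = ENNReal.ofReal 1 by simp]
      apply ENNReal.ofReal_le_ofReal
      have hsq : ‖x‖ ^ 2 ≤ 1 := by nlinarith [norm_nonneg x]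
      exact (one_le_inv₀ (by positivity)).mpr hsq
    exact lt_of_lt_of_le (measure_ball_pos _ _ one_pos) h1
  have hA : MeasurableSet A := measurableSet_closedBall.diff measurableSet_ball
  have hvolA0 : 0 < volume A := by
    have hsub : ball (((3/2*r : ℝ) : ℂ)) (r/4) ⊆ A := by
      intro z hz
      rw [mem_ball] at hz
      have hz0 : ‖((3/2*r : ℝ) : ℂ)‖ = 3/2*r := by
        rw [Complex.norm_real, Real.norm_eq_abs, abs_of_pos (by positivity)]
      constructor
      · rw [mem_closedBall_zero_iff]
        calc ‖z‖ = ‖(z - ((3/2*r : ℝ) : ℂ)) + ((3/2*r : ℝ) : ℂ)‖ := by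
              rw [sub_add_cancel]
          _ ≤ ‖z - ((3/2*r : ℝ) : ℂ)‖ + ‖((3/2*r : ℝ) : ℂ)‖ := norm_add_le _ _
          _ ≤ r/4 + 3/2*r := by
              rw [hz0]; gcongr
              rw [← dist_eq_norm]; exact hz.le
          _ ≤ 2*r := by linarith
      · rw [mem_ball_zero_iff, not_lt]
        calc r ≤ 3/2*r - r/4 := by linarith
          _ ≤ ‖((3/2*r : ℝ) : ℂ)‖ - ‖z - ((3/2*r : ℝ) : ℂ)‖ := by
              rw [hz0]; gcongr; rw [← dist_eq_norm]; exact hz.le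
          _ ≤ ‖z‖ := by
              have := norm_sub_norm_le (((3/2*r : ℝ) : ℂ)) z
              have h2 : ‖((3/2*r : ℝ) : ℂ) - z‖ = ‖z - ((3/2*r : ℝ) : ℂ)‖ := norm_sub_rev _ _
              linarith
    exact lt_of_lt_of_le (measure_ball_pos _ _ (by positivity)) (measure_mono hsub)
  have hvolAT : volume A < ⊤ :=
    lt_of_le_of_lt (measure_mono diff_subset) measure_closedBall_lt_top
  set M : ℝ≥0∞ := ENNReal.ofReal (((2*r)^(2*n))⁻¹) * Vc * volume A with hM_def
  set K : ℝ≥0∞ := Vr * I2 with hK_def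
  have hM0 : M ≠ 0 := by
    simp only [hM_def]
    apply mul_ne_zero (mul_ne_zero _ hVc0.ne') hvolA0.ne'
    simp only [ne_eq, ENNReal.ofReal_eq_zero, not_le]
    positivity
  have hMT : M ≠ ⊤ := by
    simp only [hM_def]
    exact (ENNReal.mul_lt_top (ENNReal.mul_lt_top ENNReal.ofReal_lt_top hVcT) hvolAT).ne
  have hK0 : K ≠ 0 := mul_ne_zero hVr0.ne' hI20.ne'
  have hKT : K ≠ ⊤ := (ENNReal.mul_lt_top hVrT hI2T).ne
  have hMr : 0 < M.toReal := ENNReal.toReal_pos hM0 hMT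
  have hKr : 0 < K.toReal := ENNReal.toReal_pos hK0 hKT
  set a : ℝ := M.toReal / (2 * K.toReal) with ha_def
  have ha : 0 < a := by positivity
  have key : ENNReal.ofReal a * K < M := by
    calc ENNReal.ofReal a * K = ENNReal.ofReal a * ENNReal.ofReal K.toReal := by
          rw [ENNReal.ofReal_toReal hKT]
      _ = ENNReal.ofReal (a * K.toReal) := (ENNReal.ofReal_mul ha.le).symm
      _ = ENNReal.ofReal (M.toReal / 2) := by
          congr 1
          rw [ha_def]
          field_simp
      _ < ENNReal.ofReal M.toReal := by
          rw [ENNReal.ofReal_lt_ofReal_iff hMr]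
          linarith
      _ = M := ENNReal.ofReal_toReal hMT
  refine ⟨a, ha, fun Y F γ hY hF hFY hYr hcY hγ hγF => ?_⟩
  by_contra hcon
  push_neg at hcon
  set T : Set (ℂ × EuclideanSpace ℂ (Fin n)) :=
    {p | p.2 ∈ ball 0 1 ∧ p.1 • p.2 ∈ F} with hT_def
  have hT : MeasurableSet T := by
    have h1 : T = (Prod.snd ⁻¹' ball (0 : EuclideanSpace ℂ (Fin n)) 1)
        ∩ ((fun p : ℂ × EuclideanSpace ℂ (Fin n) => p.1 • p.2) ⁻¹' F) := rfl
    rw [h1]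
    exact (measurable_snd measurableSet_ball).inter (continuous_smul.measurable hF)
  set ν := (volume : Measure ℂ).prod (volume : Measure (EuclideanSpace ℂ (Fin n))) with hν_def
  have hvolF : ENNReal.ofReal γ * Vc ≤ volume F :=
    le_trans (mul_le_mul_right (measure_mono hcY) _) hγF
  have hvolF0 : volume F ≠ 0 := by
    intro h0
    rw [h0] at hvolF
    have : ENNReal.ofReal γ * Vc ≠ 0 :=
      mul_ne_zero (by simp [ENNReal.ofReal_eq_zero, not_le, hγ]) hVc0.ne'
    exact this (le_antisymm hvolF zero_le)
  -- lower bound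
  have lower : ENNReal.ofReal (((2*r)^(2*n))⁻¹) * volume F * volume A ≤ ν T := by
    rw [hν_def, Measure.prod_apply hT]
    calc ENNReal.ofReal (((2*r)^(2*n))⁻¹) * volume F * volume A
        = ∫⁻ _ in A, ENNReal.ofReal (((2*r)^(2*n))⁻¹) * volume F ∂volume := by
          rw [setLIntegral_const]
      _ ≤ ∫⁻ w in A, volume (Prod.mk w ⁻¹' T) ∂volume := by
          refine setLIntegral_mono (measurable_measure_prodMk_left hT) ?_
          intro w hw
          obtain ⟨hw2, hw1⟩ := hw
          rw [mem_closedBall_zero_iff] at hw2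
          rw [mem_ball_zero_iff, not_lt] at hw1
          have hw0 : w ≠ 0 := by
            intro h; rw [h] at hw1; simp at hw1; linarith
          have hset : Prod.mk w ⁻¹' T = (fun x => w • x) ⁻¹' F := by
            ext x
            simp only [hT_def, mem_preimage, mem_setOf_eq]
            constructor
            · exact fun h => h.2
            · intro h
              refine ⟨?_, h⟩
              have hFb : w • x ∈ ball (0 : EuclideanSpace ℂ (Fin n)) r := hYr (hFY h)
              rw [mem_ball_zero_iff] at hFb
              rw [mem_ball_zero_iff]
              rw [norm_smul] at hFb
              by_contra hc1
              rw [not_lt] at hc1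
              have : r ≤ ‖w‖ * ‖x‖ := by
                calc r ≤ ‖w‖ := hw1
                  _ = ‖w‖ * 1 := (mul_one _).symm
                  _ ≤ ‖w‖ * ‖x‖ := by gcongr
              linarith
          rw [hset, CLS.vol_smul_preimage hw0 F, hd]
          have hw0' : 0 < ‖w‖ := lt_of_lt_of_le hr hw1
          apply mul_le_mul_left
          apply ENNReal.ofReal_le_ofReal
          apply inv_anti₀ (by positivity)
          gcongr
      _ ≤ ∫⁻ w, volume (Prod.mk w ⁻¹' T) ∂volume := setLIntegral_le_lintegral _ _
  -- upper bound
  have upper : ν T ≤ ENNReal.ofReal (a*γ) * Vr * I2 := by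
    rw [hν_def, Measure.prod_apply_symm hT]
    have hslice : ∀ x : EuclideanSpace ℂ (Fin n),
        volume ((fun w : ℂ => (w, x)) ⁻¹' T)
          = indicator (ball (0 : EuclideanSpace ℂ (Fin n)) 1)
              (fun x => volume {w : ℂ | w • x ∈ F}) x := by
      intro x
      by_cases hx : x ∈ ball (0 : EuclideanSpace ℂ (Fin n)) 1
      · rw [indicator_of_mem hx]
        have : (fun w : ℂ => (w, x)) ⁻¹' T = {w : ℂ | w • x ∈ F} := by
          ext w
          exact ⟨fun h => h.2, fun h => ⟨hx, h⟩⟩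
        rw [this]
      · rw [indicator_of_notMem hx]
        have : (fun w : ℂ => (w, x)) ⁻¹' T = ∅ := by
          apply eq_empty_iff_forall_notMem.2
          intro w hw
          exact hx hw.1
        rw [this, measure_empty]
    calc ∫⁻ x, volume ((fun w : ℂ => (w, x)) ⁻¹' T) ∂volume
        = ∫⁻ x, indicator (ball (0 : EuclideanSpace ℂ (Fin n)) 1)
            (fun x => volume {w : ℂ | w • x ∈ F}) x ∂volume := lintegral_congr hslice
      _ = ∫⁻ x in ball (0 : EuclideanSpace ℂ (Fin n)) 1,
            volume {w : ℂ | w • x ∈ F} ∂volume := lintegral_indicator measurableSet_ball _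
      _ ≤ ∫⁻ x in ball (0 : EuclideanSpace ℂ (Fin n)) 1,
            ENNReal.ofReal ((‖x‖ ^ 2)⁻¹) * (ENNReal.ofReal (a*γ) * Vr) ∂volume := by
          refine setLIntegral_mono_ae (by fun_prop) ?_
          filter_upwards [compl_mem_ae_iff.2
            (measure_singleton (0 : EuclideanSpace ℂ (Fin n)))] with x hx0 _
          have hx0' : x ≠ 0 := hx0
          have hxn : 0 < ‖x‖ := norm_pos_iff.2 hx0'
          have hxc0 : (‖x‖ : ℂ) ≠ 0 := by exact_mod_cast hxn.ne'
          set Θ : EuclideanSpace ℂ (Fin n) := ‖x‖⁻¹ • x with hΘ_def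
          have hΘ : ‖Θ‖ = 1 := by
            rw [hΘ_def, norm_smul, norm_inv, norm_norm, inv_mul_cancel₀ hxn.ne']
          have hxx : x = ‖x‖ • Θ := (smul_inv_smul₀ hxn.ne' x).symm
          have hsetx : {w : ℂ | w • x ∈ F}
              = (fun w : ℂ => (‖x‖ : ℂ) • w) ⁻¹' {w : ℂ | w • Θ ∈ F} := by
            ext w
            simp only [mem_setOf_eq, mem_preimage]
            have : w • x = ((‖x‖ : ℂ) • w) • Θ := by
              calc w • x = w • (‖x‖ • Θ) := by rw [← hxx]
                _ = ‖x‖ • (w • Θ) := smul_comm _ _ _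
                _ = ((‖x‖ : ℝ) • w) • Θ := (smul_assoc _ _ _).symm
                _ = ((‖x‖ : ℂ) • w) • Θ := by
                    congr 1
            rw [this]
          rw [hsetx, CLS.vol_smul_preimage hxc0]
          have hnn : ‖(‖x‖ : ℂ)‖ = ‖x‖ := by
            rw [Complex.norm_real, norm_norm]
          rw [hnn, Complex.finrank_real_complex]
          gcongr
          calc volume {w : ℂ | w • Θ ∈ F}
              ≤ ENNReal.ofReal (a*γ) * volume {w : ℂ | w • Θ ∈ Y} := (hcon Θ hΘ).le
            _ ≤ ENNReal.ofReal (a*γ) * Vr := by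
                gcongr
                refine measure_mono fun w hw => ?_
                rw [mem_ball_zero_iff]
                have : w • Θ ∈ ball (0 : EuclideanSpace ℂ (Fin n)) r := hYr hw
                rw [mem_ball_zero_iff, norm_smul, hΘ, mul_one] at this
                exact this
      _ = ENNReal.ofReal (a*γ) * Vr * I2 := by
          rw [lintegral_mul_const _ (by fun_prop)]
          ring
  -- combine
  have hγ0 : ENNReal.ofReal γ ≠ 0 := (ENNReal.ofReal_pos.2 hγ).ne'
  have h1 : ENNReal.ofReal γ * M ≤ ENNReal.ofReal (a*γ) * K := by
    calc ENNReal.ofReal γ * M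
        = ENNReal.ofReal (((2*r)^(2*n))⁻¹) * (ENNReal.ofReal γ * Vc) * volume A := by
          rw [hM_def]; ring
      _ ≤ ENNReal.ofReal (((2*r)^(2*n))⁻¹) * volume F * volume A := by gcongr
      _ ≤ ν T := lower
      _ ≤ ENNReal.ofReal (a*γ) * Vr * I2 := upper
      _ = ENNReal.ofReal (a*γ) * K := by rw [hK_def]; ring
  have h2 : ENNReal.ofReal (a*γ) * K < ENNReal.ofReal γ * M := by
    calc ENNReal.ofReal (a*γ) * K = ENNReal.ofReal γ * (ENNReal.ofReal a * K) := by
          rw [ENNReal.ofReal_mul ha.le]; ring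
      _ < ENNReal.ofReal γ * M := by
          rw [ENNReal.mul_lt_mul_iff_right hγ0 ENNReal.ofReal_ne_top]
          exact key
  exact absurd (h1.trans_lt h2) (lt_irrefl _)
end
end
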